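/- Equivariance of the triangle transformation under similarities: let θ denote the geometric element transformation on triangles (x₀, x₁, x₂) in ℝ² (with all vertices distinct from the centroid), and let g(x) = λ(Ax + b) be a similarity with λ > 0, A ∈ SO(2), b ∈ ℝ². Then for every admissible triangle x = (x₀, x₁, x₂), the triangle (g(x₀), g(x₁), g(x₂)) is admissible and θ(g(x₀), g(x₁), g(x₂)) = (g(θ(x)₀), g(θ(x)₁), g(θ(x)₂)). -/
import Mathlib


/-- The centroid of a triangle in the Euclidean plane. -/
noncomputable def triCentroid (x : ZMod 3 → EuclideanSpace ℝ (Fin 2)) :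
    EuclideanSpace ℝ (Fin 2) :=
  (3 : ℝ)⁻¹ • (x 0 + x 1 + x 2)

/-- The geometric element transformation on triangles in the plane:
`θ(x)ᵢ = (2/3)rᵢ(xᵢ − c) − (1/3)r_{i+1}(x_{i+1} − c) − (1/3)r_{i−1}(x_{i−1} − c) + c`
with `rᵢ = ‖x_{i−1} − c‖ / ‖xᵢ − c‖` and `c` the centroid (note `i − 2 = i + 1`
in `ZMod 3`). -/
noncomputable def triTheta (x : ZMod 3 → EuclideanSpace ℝ (Fin 2)) (i : ZMod 3) :
    EuclideanSpace ℝ (Fin 2) :=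
  (2 / 3 * (‖x (i - 1) - triCentroid x‖ / ‖x i - triCentroid x‖)) • (x i - triCentroid x)
    - (1 / 3 * (‖x i - triCentroid x‖ / ‖x (i + 1) - triCentroid x‖)) •
        (x (i + 1) - triCentroid x)
    - (1 / 3 * (‖x (i + 1) - triCentroid x‖ / ‖x (i - 1) - triCentroid x‖)) •
        (x (i - 1) - triCentroid x)
    + triCentroid x

/-- The triangle transformation is equivariant under the similarity group of the
plane: for a similarity `g(v) = λ(A v + b)` (with `λ > 0`, `A ∈ SO(2)`, `b ∈ ℝ²`)
and any admissible triangle `x`, the triangle `g ∘ x` is admissible and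
`θ(g ∘ x) = g ∘ θ(x)`. -/
theorem triangle_transformation_similarity_equivariant
    (A : EuclideanSpace ℝ (Fin 2) →ₗ[ℝ] EuclideanSpace ℝ (Fin 2))
    (hA : ∀ v, ‖A v‖ = ‖v‖) (hdet : LinearMap.det A = 1)
    (b : EuclideanSpace ℝ (Fin 2)) (l : ℝ) (hl : 0 < l)
    (x : ZMod 3 → EuclideanSpace ℝ (Fin 2))
    (hadm : ∀ i, x i ≠ triCentroid x) :
    (∀ i, (fun j => l • (A (x j) + b)) i ≠ triCentroid (fun j => l • (A (x j) + b))) ∧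
      (∀ i, triTheta (fun j => l • (A (x j) + b)) i = l • (A (triTheta x i) + b)) := by
  set c := triCentroid x with hc
  have hcent : triCentroid (fun j => l • (A (x j) + b)) = l • (A c + b) := by
    simp only [triCentroid, hc, map_smul, map_add]
    module
  have hdiff : ∀ i, (l • (A (x i) + b)) - triCentroid (fun j => l • (A (x j) + b))
      = l • A (x i - c) := by
    intro i
    rw [hcent, map_sub]
    module
  have hnorm : ∀ i, ‖(l • (A (x i) + b)) - triCentroid (fun j => l • (A (x j) + b))‖
      = l * ‖x i - c‖ := by
    intro i
    rw [hdiff, norm_smul, hA, Real.norm_eq_abs, abs_of_pos hl]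
  have hne : ∀ i, x i - c ≠ 0 := fun i => sub_ne_zero_of_ne (hadm i)
  constructor
  · intro i h
    have := hdiff i
    rw [sub_eq_zero_of_eq h] at this
    have hAz : A (x i - c) = 0 := by
      have := this.symm
      rwa [smul_eq_zero, or_iff_right (ne_of_gt hl)] at this
    have : ‖x i - c‖ = 0 := by rw [← hA, hAz, norm_zero]
    exact hne i (norm_eq_zero.mp this)
  · intro i
    have hdiff' : ∀ j, (l • (A (x j) + b)) - l • (A c + b) = l • A (x j - c) := by
      intro j; rw [map_sub]; module
    have hnorm' : ∀ j, ‖(l • (A (x j) + b)) - l • (A c + b)‖ = l * ‖x j - c‖ := by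
      intro j
      rw [hdiff', norm_smul, hA, Real.norm_eq_abs, abs_of_pos hl]
    simp only [triTheta, hcent, hdiff', norm_smul, hA, Real.norm_eq_abs, abs_of_pos hl]
    have h1 : ∀ a d : ℝ, (l * a) / (l * d) = a / d := by
      intro a d
      rw [mul_div_mul_left _ _ (ne_of_gt hl)]
    rw [h1, h1, h1]
    simp only [map_sub, map_add, map_smul, ← hc]
    module
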